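/- Let C be a monoidal category equipped with a commutor σ. Then for all objects A, B, C the following diagram commutes: starting at (C⊗B)⊗A, the composite (1_A ⊗ σ_{C,B}) ∘ σ_{C⊗B,A} : (C⊗B)⊗A ⟶ A⊗(B⊗C) equals the composite α_{A,B,C} ∘ (σ_{B,A} ⊗ 1_C) ∘ σ_{C,B⊗A} ∘ α_{C,B,A} : (C⊗B)⊗A ⟶ A⊗(B⊗C). -/

import Mathlib

open CategoryTheory MonoidalCategory

universe v u

/-- A commutor on a monoidal category: a natural family of isomorphisms
`σ_{A,B} : A ⊗ B ⟶ B ⊗ A` satisfying the unit, symmetry and coboundary axioms.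
A monoidal category with a commutor is a coboundary category. -/
structure Commutor (V : Type u) [Category.{v} V] [MonoidalCategory V] where
  σ : ∀ A B : V, A ⊗ B ⟶ B ⊗ A
  naturality : ∀ {A A' B B' : V} (f : A ⟶ A') (g : B ⟶ B'),
    (f ⊗ₘ g) ≫ σ A' B' = σ A B ≫ (g ⊗ₘ f)
  unit_right : ∀ A : V, σ A (𝟙_ V) = (ρ_ A).hom ≫ (λ_ A).inv
  unit_left : ∀ B : V, σ (𝟙_ V) B = (λ_ B).hom ≫ (ρ_ B).inv
  symmetry : ∀ A B : V, σ A B ≫ σ B A = 𝟙 (A ⊗ B)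
  coboundary : ∀ A B C : V,
    (α_ A B C).hom ≫ (𝟙 A ⊗ₘ σ B C) ≫ σ A (C ⊗ B) ≫ (α_ C B A).hom =
      (σ A B ⊗ₘ 𝟙 C) ≫ σ (B ⊗ A) C

/-- The local rule `τ^A_{B,C} : (A⊗B)⊗C ⟶ (A⊗C)⊗B`. -/
def localRule {V : Type u} [Category.{v} V] [MonoidalCategory V] (c : Commutor V)
    (A B C : V) : (A ⊗ B) ⊗ C ⟶ (A ⊗ C) ⊗ B :=
  (c.σ A B ⊗ₘ 𝟙 C) ≫ (α_ B A C).hom ≫ c.σ B (A ⊗ C)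


/-- The commuting diagram implied by the coboundary axioms:
`(1_A ⊗ σ_{C,B}) ∘ σ_{C⊗B,A} = α_{A,B,C} ∘ (σ_{B,A} ⊗ 1_C) ∘ σ_{C,B⊗A} ∘ α_{C,B,A}`
as morphisms `(C⊗B)⊗A ⟶ A⊗(B⊗C)`. -/
theorem commutor_diagram {V : Type u} [Category.{v} V] [MonoidalCategory V]
    (c : Commutor V) (A B C : V) :
    c.σ (C ⊗ B) A ≫ (𝟙 A ⊗ₘ c.σ C B) =
      (α_ C B A).hom ≫ c.σ C (B ⊗ A) ≫ (c.σ B A ⊗ₘ 𝟙 C) ≫ (α_ A B C).hom := by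
  have h1 := c.naturality (c.σ C B) (𝟙 A)
  have h2 := c.naturality (𝟙 C) (c.σ B A)
  have h3 := c.coboundary C B A
  rw [← h1, ← h3]
  slice_lhs 2 3 => rw [h2]
  simp
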